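/- Let λ > 0, μ > 0, τ ≥ 0, σ ≥ 0, let D : ℝ^n → (ℝ²)^N be a linear map with adjoint Dᵀ, f ∈ ℝ^n, and let G : ℝ^n → ℝ^N be continuous. Suppose sequences uᵏ ∈ ℝ^n and vᵏ, Λᵏ, sᵏ ∈ (ℝ²)^N satisfy, for every k: (i) λ(uᵏ⁺¹ − f) + Dᵀ(μ(Duᵏ⁺¹ − vᵏ) − Λᵏ) + τ(uᵏ⁺¹ − uᵏ) = 0; (ii) for each component 1 ≤ i ≤ N, sᵏ⁺¹ᵢ is a subgradient of the Euclidean norm |·| on ℝ² at vᵏ⁺¹ᵢ and Gᵢ(uᵏ⁺¹) sᵏ⁺¹ᵢ + μ(vᵏ⁺¹ᵢ − (Duᵏ⁺¹)ᵢ) + Λᵏᵢ + σ(vᵏ⁺¹ᵢ − vᵏᵢ) = 0; (iii) Λᵏ⁺¹ = Λᵏ + μ(vᵏ⁺¹ − Duᵏ⁺¹). If uᵏ → u*, vᵏ → v*, Λᵏ → Λ*, and sᵏ → s* as k → ∞, then the limit point satisfies the first-order optimality conditions: v* = Du*, λ(u* − f) − DᵀΛ* = 0, and for each i, s*ᵢ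 is a subgradient of |·| at v*ᵢ with Gᵢ(u*) s*ᵢ + Λ*ᵢ = 0. -/

import Mathlib

open scoped RealInnerProductSpace
open Filter Topology

/-- limit-point characterization for the proximal ADMM. If the iterates
`(uᵏ, vᵏ, Λᵏ, sᵏ)` satisfy the optimality conditions (i)–(iii) of the `u`-subproblem,
the `v`-subproblem (with subgradients `sᵏ⁺¹ᵢ` of the Euclidean norm at `vᵏ⁺¹ᵢ`) and the
multiplier update, and converge to `(u*, v*, Λ*, s*)`, then the limit satisfies the
first-order optimality conditions: `v* = Du*`, `λ(u* − f) − DᵀΛ* = 0`, and for each `i`,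
`s*ᵢ ∈ ∂|·|(v*ᵢ)` with `Gᵢ(u*) s*ᵢ + Λ*ᵢ = 0`. -/
theorem stmt9 {n N : ℕ} (lam μ τ σ : ℝ) (hlam : 0 < lam) (hμ : 0 < μ)
    (hτ : 0 ≤ τ) (hσ : 0 ≤ σ)
    (D : EuclideanSpace ℝ (Fin n) →L[ℝ]
      PiLp 2 (fun _ : Fin N => EuclideanSpace ℝ (Fin 2)))
    (f : EuclideanSpace ℝ (Fin n))
    (G : EuclideanSpace ℝ (Fin n) → Fin N → ℝ) (hG : Continuous G)
    (u : ℕ → EuclideanSpace ℝ (Fin n))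
    (v Λ s : ℕ → PiLp 2 (fun _ : Fin N => EuclideanSpace ℝ (Fin 2)))
    (hi : ∀ k : ℕ,
      lam • (u (k + 1) - f) +
          (ContinuousLinearMap.adjoint D) (μ • (D (u (k + 1)) - v k) - Λ k) +
          τ • (u (k + 1) - u k) = 0)
    (hii : ∀ k : ℕ, ∀ i : Fin N,
      (∀ w : EuclideanSpace ℝ (Fin 2), ‖w‖ ≥ ‖v (k + 1) i‖ + ⟪s (k + 1) i, w - v (k + 1) i⟫) ∧
        G (u (k + 1)) i • s (k + 1) i + μ • (v (k + 1) i - D (u (k + 1)) i) + Λ k i +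
          σ • (v (k + 1) i - v k i) = 0)
    (hiii : ∀ k : ℕ, Λ (k + 1) = Λ k + μ • (v (k + 1) - D (u (k + 1))))
    (ustar : EuclideanSpace ℝ (Fin n))
    (vstar Λstar sstar : PiLp 2 (fun _ : Fin N => EuclideanSpace ℝ (Fin 2)))
    (hu : Tendsto u atTop (𝓝 ustar)) (hv : Tendsto v atTop (𝓝 vstar))
    (hΛ : Tendsto Λ atTop (𝓝 Λstar)) (hs : Tendsto s atTop (𝓝 sstar)) :
    vstar = D ustar ∧
      lam • (ustar - f) - (ContinuousLinearMap.adjoint D) Λstar = 0 ∧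
      ∀ i : Fin N,
        (∀ w : EuclideanSpace ℝ (Fin 2), ‖w‖ ≥ ‖vstar i‖ + ⟪sstar i, w - vstar i⟫) ∧
          G ustar i • sstar i + Λstar i = 0 := by
  have hu1 : Tendsto (fun k => u (k+1)) atTop (𝓝 ustar) := hu.comp (tendsto_add_atTop_nat 1)
  have hv1 : Tendsto (fun k => v (k+1)) atTop (𝓝 vstar) := hv.comp (tendsto_add_atTop_nat 1)
  have hΛ1 : Tendsto (fun k => Λ (k+1)) atTop (𝓝 Λstar) := hΛ.comp (tendsto_add_atTop_nat 1)
  have hs1 : Tendsto (fun k => s (k+1)) atTop (𝓝 sstar) := hs.comp (tendsto_add_atTop_nat 1)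
  have hDu1 : Tendsto (fun k => D (u (k+1))) atTop (𝓝 (D ustar)) :=
    (D.continuous.tendsto _).comp hu1
  have hkey : μ • (vstar - D ustar) = (0 : PiLp 2 (fun _ : Fin N => EuclideanSpace ℝ (Fin 2))) := by
    have h1 : Tendsto (fun k => μ • (v (k+1) - D (u (k+1)))) atTop
        (𝓝 (μ • (vstar - D ustar))) := (hv1.sub hDu1).const_smul μ
    have h2 : Tendsto (fun k => μ • (v (k+1) - D (u (k+1)))) atTop (𝓝 0) := by
      have he : (fun k => μ • (v (k+1) - D (u (k+1)))) = fun k => Λ (k+1) - Λ k := by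
        funext k; rw [hiii k]; abel
      rw [he]
      simpa using hΛ1.sub hΛ
    exact tendsto_nhds_unique h1 h2
  have hveq : vstar = D ustar := by
    rcases smul_eq_zero.mp hkey with h | h
    · exact absurd h hμ.ne'
    · exact sub_eq_zero.mp h
  refine ⟨hveq, ?_, ?_⟩
  · have h1 : Tendsto (fun k =>
        lam • (u (k+1) - f) +
          (ContinuousLinearMap.adjoint D) (μ • (D (u (k+1)) - v k) - Λ k) +
          τ • (u (k+1) - u k)) atTop
        (𝓝 (lam • (ustar - f) +
          (ContinuousLinearMap.adjoint D) (μ • (D ustar - vstar) - Λstar) +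
          τ • (ustar - ustar))) :=
      (((hu1.sub tendsto_const_nhds).const_smul lam).add
        (((ContinuousLinearMap.adjoint D).continuous.tendsto _).comp
          (((hDu1.sub hv).const_smul μ).sub hΛ))).add
        ((hu1.sub hu).const_smul τ)
    have h0 : Tendsto (fun k =>
        lam • (u (k+1) - f) +
          (ContinuousLinearMap.adjoint D) (μ • (D (u (k+1)) - v k) - Λ k) +
          τ • (u (k+1) - u k)) atTop (𝓝 (0 : EuclideanSpace ℝ (Fin n))) := by
      simp only [hi]
      exact tendsto_const_nhds
    have h2 := tendsto_nhds_unique h1 h0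
    rw [← hveq] at h2
    simp only [sub_self, smul_zero, zero_sub, map_neg] at h2
    linear_combination (norm := module) h2
  · intro i
    have hvi : Tendsto (fun k => v (k+1) i) atTop (𝓝 (vstar i)) :=
      ((PiLp.continuous_apply _ _ i).tendsto _).comp hv1
    have hvi0 : Tendsto (fun k => v k i) atTop (𝓝 (vstar i)) :=
      ((PiLp.continuous_apply _ _ i).tendsto _).comp hv
    have hsi : Tendsto (fun k => s (k+1) i) atTop (𝓝 (sstar i)) :=
      ((PiLp.continuous_apply _ _ i).tendsto _).comp hs1
    have hΛi : Tendsto (fun k => Λ k i) atTop (𝓝 (Λstar i)) :=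
      ((PiLp.continuous_apply _ _ i).tendsto _).comp hΛ
    have hDui : Tendsto (fun k => D (u (k+1)) i) atTop (𝓝 (D ustar i)) :=
      ((PiLp.continuous_apply _ _ i).tendsto _).comp hDu1
    have hGi : Tendsto (fun k => G (u (k+1)) i) atTop (𝓝 (G ustar i)) :=
      (((continuous_apply i).comp hG).tendsto _).comp hu1
    constructor
    · intro w
      have hlim : Tendsto (fun k => ‖v (k+1) i‖ + ⟪s (k+1) i, w - v (k+1) i⟫) atTop
          (𝓝 (‖vstar i‖ + ⟪sstar i, w - vstar i⟫)) :=
        hvi.norm.add (Tendsto.inner (𝕜 := ℝ) hsi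
          ((tendsto_const_nhds : Tendsto (fun _ : ℕ => w) atTop (𝓝 w)).sub hvi))
      exact le_of_tendsto hlim (Filter.Eventually.of_forall fun k => (hii k i).1 w)
    · have h1 : Tendsto (fun k =>
          G (u (k+1)) i • s (k+1) i + μ • (v (k+1) i - D (u (k+1)) i) + Λ k i +
            σ • (v (k+1) i - v k i)) atTop
          (𝓝 (G ustar i • sstar i + μ • (vstar i - D ustar i) + Λstar i +
            σ • (vstar i - vstar i))) :=
        (((hGi.smul hsi).add ((hvi.sub hDui).const_smul μ)).add hΛi).add
          ((hvi.sub hvi0).const_smul σ)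
      have h2 := tendsto_nhds_unique h1 (by
        simpa [fun k => (hii k i).2] using tendsto_const_nhds :
        Tendsto (fun k =>
          G (u (k+1)) i • s (k+1) i + μ • (v (k+1) i - D (u (k+1)) i) + Λ k i +
            σ • (v (k+1) i - v k i)) atTop (𝓝 (0 : EuclideanSpace ℝ (Fin 2))))
      rw [← hveq] at h2
      simpa using h2
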